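/- For any given β > 1 and any ε with 0 < ε ≤ 4β(H_1+H_2)² log β / min{H_1, H_2}, there exist a positive integer k_0′ and a positive constant a = a(ε, β, H_1, H_2) such that for all k > k_0′ and all sufficiently large n, ℙ(|Σ_{i=k}^n ΔM_{i+1}/T_{i+1}| ≥ ε) ≤ 2 e^{−a k}. -/

import Mathlib

open MeasureTheory Filter Set

lemma exp_le_one_add_add_sq {x : ℝ} (hx : |x| ≤ 1) :
    Real.exp x ≤ 1 + x + x ^ 2 := by
  have h := Real.exp_bound hx (n := 2) (by norm_num)
  have hsum : ∑ i ∈ Finset.range 2, x ^ i / (Nat.factorial i) = 1 + x := by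
    simp [Finset.sum_range_succ]
  rw [hsum] at h
  have h3 := (abs_le.1 h).2
  norm_num [Nat.factorial] at h3
  nlinarith [sq_abs x]

lemma integrable_of_ae_bdd' {Ω : Type*} {m0 : MeasurableSpace Ω} {ℙ : Measure Ω}
    [IsFiniteMeasure ℙ] {g : Ω → ℝ} (hg : AEStronglyMeasurable g ℙ) {C : ℝ}
    (h : ∀ᵐ ω ∂ℙ, |g ω| ≤ C) : Integrable g ℙ :=
  (integrable_const C).mono' hg (by simpa [Real.norm_eq_abs] using h)

lemma azuma_mgf {Ω : Type*} {m0 : MeasurableSpace Ω} {ℙ : Measure Ω} [IsProbabilityMeasure ℙ]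
    (ℱ : Filtration ℕ m0) (D : ℕ → Ω → ℝ) (c : ℕ → ℝ) (k : ℕ) (l : ℝ)
    (hmeas : ∀ i, k ≤ i → StronglyMeasurable[ℱ (i + 1)] (D i))
    (hc : ∀ i, k ≤ i → 0 ≤ c i)
    (hbdd : ∀ i, k ≤ i → ∀ᵐ ω ∂ℙ, |D i ω| ≤ c i)
    (hcond : ∀ i, k ≤ i → ℙ[D i | ℱ i] =ᵐ[ℙ] 0)
    (hl : 0 ≤ l) (hlc : ∀ i, k ≤ i → l * c i ≤ 1) :
    ∀ n, Integrable (fun ω => Real.exp (l * ∑ i ∈ Finset.Ico k n, D i ω)) ℙ ∧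
      ∫ ω, Real.exp (l * ∑ i ∈ Finset.Ico k n, D i ω) ∂ℙ ≤
      Real.exp (l ^ 2 * ∑ i ∈ Finset.Ico k n, (c i) ^ 2) := by
  intro n
  induction n with
  | zero =>
    rw [Finset.Ico_eq_empty (by omega)]
    exact ⟨by simpa using integrable_const (1:ℝ), by simp⟩
  | succ n ih =>
    rcases Nat.lt_or_ge n k with h1 | hkn
    · rw [Finset.Ico_eq_empty (by omega)]
      exact ⟨by simpa using integrable_const (1:ℝ), by simp⟩
    -- main step
    set S : Ω → ℝ := fun ω => ∑ i ∈ Finset.Ico k n, D i ω with hS_def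
    set cS : ℝ := ∑ i ∈ Finset.Ico k n, c i with hcS_def
    have hS_sm : StronglyMeasurable[ℱ n] S := by
      apply Finset.stronglyMeasurable_fun_sum
      intro i hi
      have hik : k ≤ i ∧ i < n := Finset.mem_Ico.1 hi
      exact (hmeas i hik.1).mono (ℱ.mono (by omega))
    set F : Ω → ℝ := fun ω => Real.exp (l * S ω) with hF_def
    have hF_sm : StronglyMeasurable[ℱ n] F :=
      Real.continuous_exp.comp_stronglyMeasurable (hS_sm.const_mul l)
    have hball : ∀ᵐ ω ∂ℙ, ∀ i, k ≤ i → |D i ω| ≤ c i := by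
      rw [ae_all_iff]
      intro i
      by_cases h : k ≤ i
      · exact (hbdd i h).mono fun ω hω _ => hω
      · exact Filter.Eventually.of_forall fun ω hki => absurd hki h
    have hF_bdd : ∀ᵐ ω ∂ℙ, |F ω| ≤ Real.exp (l * cS) := by
      filter_upwards [hball] with ω hω
      have hS : S ω ≤ cS := by
        refine le_trans (le_trans (le_abs_self _) (Finset.abs_sum_le_sum_abs _ _)) ?_
        exact Finset.sum_le_sum fun i hi => hω i (Finset.mem_Ico.1 hi).1
      have : F ω = Real.exp (l * S ω) := rfl
      rw [this, abs_of_pos (Real.exp_pos _)]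
      exact Real.exp_le_exp.2 (mul_le_mul_of_nonneg_left hS hl)
    have hF_int : Integrable F ℙ :=
      integrable_of_ae_bdd' ((hF_sm.mono (ℱ.le n)).aestronglyMeasurable) hF_bdd
    have hD_sm : StronglyMeasurable[ℱ (n + 1)] (D n) := hmeas n hkn
    have hD_int : Integrable (D n) ℙ :=
      integrable_of_ae_bdd' ((hD_sm.mono (ℱ.le (n + 1))).aestronglyMeasurable) (hbdd n hkn)
    have hFD_int : Integrable (F * D n) ℙ := by
      refine integrable_of_ae_bdd' (C := Real.exp (l * cS) * c n)
        (((hF_sm.mono (ℱ.le n)).mul (hD_sm.mono (ℱ.le (n + 1)))).aestronglyMeasurable) ?_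
      filter_upwards [hF_bdd, hbdd n hkn] with ω h1 h2
      have : |F ω * D n ω| = |F ω| * |D n ω| := abs_mul _ _
      rw [Pi.mul_apply, this]
      exact mul_le_mul h1 h2 (abs_nonneg _) (Real.exp_nonneg _)
    have hzero : ∫ ω, F ω * D n ω ∂ℙ = 0 := by
      have h1 := condExp_mul_of_stronglyMeasurable_left hF_sm hFD_int hD_int
      have h2 : F * ℙ[D n | ℱ n] =ᵐ[ℙ] 0 := by
        filter_upwards [hcond n hkn] with ω hω
        simp only [Pi.mul_apply, Pi.zero_apply] at *
        rw [hω, mul_zero]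
      calc ∫ ω, F ω * D n ω ∂ℙ = ∫ ω, (ℙ[F * D n | ℱ n]) ω ∂ℙ :=
            (integral_condExp (ℱ.le n)).symm
        _ = ∫ ω, (0 : Ω → ℝ) ω ∂ℙ := integral_congr_ae (h1.trans h2)
        _ = 0 := by simp
    -- pointwise bound
    have hpt : ∀ᵐ ω ∂ℙ, Real.exp (l * (S ω + D n ω)) ≤
        F ω * (1 + (l * c n) ^ 2) + l * (F ω * D n ω) := by
      filter_upwards [hbdd n hkn] with ω hD
      have hcn := hc n hkn
      have hlcn := hlc n hkn
      have h1 : |l * D n ω| ≤ 1 := by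
        rw [abs_mul, abs_of_nonneg hl]
        calc l * |D n ω| ≤ l * c n := mul_le_mul_of_nonneg_left hD hl
          _ ≤ 1 := hlcn
      have h2 := exp_le_one_add_add_sq h1
      have h3 : (l * D n ω) ^ 2 ≤ (l * c n) ^ 2 := by
        rw [← sq_abs (l * D n ω)]
        apply pow_le_pow_left₀ (abs_nonneg _)
        rw [abs_mul, abs_of_nonneg hl]
        exact mul_le_mul_of_nonneg_left hD hl
      have h4 : (0:ℝ) ≤ F ω := Real.exp_nonneg _
      have h5 : Real.exp (l * (S ω + D n ω)) = F ω * Real.exp (l * D n ω) := by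
        rw [mul_add, Real.exp_add]
      rw [h5]
      calc F ω * Real.exp (l * D n ω) ≤ F ω * (1 + l * D n ω + (l * c n) ^ 2) :=
            mul_le_mul_of_nonneg_left (h2.trans (by linarith)) h4
        _ = F ω * (1 + (l * c n) ^ 2) + l * (F ω * D n ω) := by ring
    have hint_lhs : Integrable (fun ω => Real.exp (l * (S ω + D n ω))) ℙ := by
      refine integrable_of_ae_bdd' (C := Real.exp (l * (cS + c n))) ?_ ?_
      · apply (Real.continuous_exp.comp_stronglyMeasurable
          ((((hS_sm.mono (ℱ.le n)).add (hD_sm.mono (ℱ.le (n+1))))).const_mul l)).aestronglyMeasurable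
      · filter_upwards [hF_bdd, hbdd n hkn] with ω h1 h2
        rw [abs_of_pos (Real.exp_pos _), mul_add, Real.exp_add]
        have hFω : Real.exp (l * S ω) ≤ Real.exp (l * cS) := by
          have := h1; rwa [abs_of_pos (Real.exp_pos _)] at this
        have : Real.exp (l * D n ω) ≤ Real.exp (l * c n) := by
          apply Real.exp_le_exp.2
          apply mul_le_mul_of_nonneg_left (le_trans (le_abs_self _) h2) hl
        calc Real.exp (l * S ω) * Real.exp (l * D n ω)
            ≤ Real.exp (l * cS) * Real.exp (l * c n) :=
              mul_le_mul hFω this (Real.exp_nonneg _) (Real.exp_nonneg _)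
          _ = Real.exp (l * cS + l * c n) := (Real.exp_add _ _).symm
          _ = Real.exp (l * (cS + c n)) := by ring_nf
    have hint_rhs : Integrable (fun ω => F ω * (1 + (l * c n) ^ 2) + l * (F ω * D n ω)) ℙ :=
      (hF_int.mul_const _).add (hFD_int.const_mul l)
    -- chain
    have hsum_eq : ∀ ω, ∑ i ∈ Finset.Ico k (n + 1), D i ω = S ω + D n ω := fun ω =>
      Finset.sum_Ico_succ_top hkn _
    refine ⟨by simp only [hsum_eq]; exact hint_lhs, ?_⟩
    have hcsum_eq : ∑ i ∈ Finset.Ico k (n + 1), (c i) ^ 2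
        = (∑ i ∈ Finset.Ico k n, (c i) ^ 2) + (c n) ^ 2 := Finset.sum_Ico_succ_top hkn _
    calc ∫ ω, Real.exp (l * ∑ i ∈ Finset.Ico k (n + 1), D i ω) ∂ℙ
        = ∫ ω, Real.exp (l * (S ω + D n ω)) ∂ℙ := by
          congr 1; funext ω; rw [hsum_eq ω]
      _ ≤ ∫ ω, (F ω * (1 + (l * c n) ^ 2) + l * (F ω * D n ω)) ∂ℙ :=
          integral_mono_ae hint_lhs hint_rhs hpt
      _ = (1 + (l * c n) ^ 2) * ∫ ω, F ω ∂ℙ + l * ∫ ω, F ω * D n ω ∂ℙ := by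
          have h1 : Integrable (fun ω => F ω * (1 + (l * c n) ^ 2)) ℙ := hF_int.mul_const _
          have h2 : Integrable (fun ω => l * (F ω * D n ω)) ℙ := by
            have := hFD_int.const_mul l
            simpa [Pi.mul_apply, mul_comm] using this
          rw [integral_add h1 h2, integral_mul_const, integral_const_mul]
          ring
      _ = (1 + (l * c n) ^ 2) * ∫ ω, F ω ∂ℙ := by rw [hzero]; ring
      _ ≤ (1 + (l * c n) ^ 2) * Real.exp (l ^ 2 * ∑ i ∈ Finset.Ico k n, (c i) ^ 2) := by
          apply mul_le_mul_of_nonneg_left ih.2 (by positivity)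
      _ ≤ Real.exp ((l * c n) ^ 2) * Real.exp (l ^ 2 * ∑ i ∈ Finset.Ico k n, (c i) ^ 2) := by
          apply mul_le_mul_of_nonneg_right _ (Real.exp_nonneg _)
          have := Real.add_one_le_exp ((l * c n) ^ 2)
          linarith
      _ = Real.exp (l ^ 2 * ∑ i ∈ Finset.Ico k (n + 1), (c i) ^ 2) := by
          rw [← Real.exp_add, hcsum_eq]; ring_nf

lemma chernoff_tail {Ω : Type*} {m0 : MeasurableSpace Ω} {ℙ : Measure Ω} [IsProbabilityMeasure ℙ]
    (S : Ω → ℝ) (l t v : ℝ) (hl : 0 ≤ l)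
    (hint : Integrable (fun ω => Real.exp (l * S ω)) ℙ)
    (hmgf : ∫ ω, Real.exp (l * S ω) ∂ℙ ≤ Real.exp v) :
    ℙ {ω | t ≤ S ω} ≤ ENNReal.ofReal (Real.exp (v - l * t)) := by
  have h := ProbabilityTheory.measure_ge_le_exp_mul_mgf (X := S) (μ := ℙ) t hl hint
  have hm : ProbabilityTheory.mgf S ℙ l = ∫ ω, Real.exp (l * S ω) ∂ℙ := rfl
  have hne : ℙ {ω | t ≤ S ω} ≠ ⊤ := measure_ne_top _ _
  rw [← ENNReal.ofReal_toReal hne]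
  apply ENNReal.ofReal_le_ofReal
  calc (ℙ {ω | t ≤ S ω}).toReal ≤ Real.exp (-l * t) * ProbabilityTheory.mgf S ℙ l := h
    _ ≤ Real.exp (-l * t) * Real.exp v := by
        rw [hm]; exact mul_le_mul_of_nonneg_left hmgf (Real.exp_nonneg _)
    _ = Real.exp (v - l * t) := by rw [← Real.exp_add]; ring_nf

lemma tele_sum (g : ℕ → ℝ) (k : ℕ) :
    ∀ n, k ≤ n → ∑ i ∈ Finset.Ico k n, (g i - g (i + 1)) = g k - g n := by
  intro n
  induction n with
  | zero => intro h; interval_cases k; simp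
  | succ n ih =>
    intro h
    rcases Nat.lt_or_ge k (n+1) with h1 | h1
    · have hk : k ≤ n := by omega
      rw [Finset.sum_Ico_succ_top hk, ih hk]; ring
    · have : k = n + 1 := by omega
      subst this; simp

lemma sum_inv_sq_le (k : ℕ) (hk : 1 ≤ k) (n : ℕ) :
    ∑ i ∈ Finset.Ico k n, (1 / (i:ℝ)) ^ 2 ≤ 2 / (k:ℝ) := by
  have hkpos : (0:ℝ) < k := by exact_mod_cast hk
  rcases le_or_gt k n with h | h
  · have key : ∑ i ∈ Finset.Ico k n, (1 / (i:ℝ)) ^ 2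
        ≤ ∑ i ∈ Finset.Ico k n,
          ((fun j : ℕ => 2 * (1/(j:ℝ))) i - (fun j : ℕ => 2 * (1/(j:ℝ))) (i+1)) := by
      apply Finset.sum_le_sum
      intro i hi
      have hik : k ≤ i := (Finset.mem_Ico.1 hi).1
      have hi1 : (1:ℝ) ≤ i := by exact_mod_cast le_trans hk hik
      have hipos : (0:ℝ) < i := by linarith
      simp only
      have hcast : ((i+1:ℕ):ℝ) = (i:ℝ) + 1 := by push_cast; ring
      rw [hcast]
      have e1 : 2 * (1/(i:ℝ)) - 2 * (1/((i:ℝ)+1)) = 2 / ((i:ℝ) * ((i:ℝ)+1)) := by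
        field_simp
        ring
      rw [e1, div_pow, one_pow, div_le_div_iff₀ (by positivity) (by positivity)]
      nlinarith
    have tele := tele_sum (fun j : ℕ => 2 * (1/(j:ℝ))) k n h
    calc ∑ i ∈ Finset.Ico k n, (1 / (i:ℝ)) ^ 2
        ≤ ∑ i ∈ Finset.Ico k n,
          ((fun j : ℕ => 2 * (1/(j:ℝ))) i - (fun j : ℕ => 2 * (1/(j:ℝ))) (i+1)) := key
      _ = 2 * (1/(k:ℝ)) - 2 * (1/(n:ℝ)) := tele
      _ ≤ 2 / (k:ℝ) := by
          have h0 : (0:ℝ) ≤ 2 * (1/(n:ℝ)) := by positivity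
          have h1 : 2 * (1/(k:ℝ)) = 2 / (k:ℝ) := by ring
          linarith
  · rw [Finset.Ico_eq_empty (by omega)]
    simp
    positivity

set_option maxHeartbeats 2000000 in
/-- Exponential decay in k for the tail of the martingale sums Σ_{i=k}^n ΔM_{i+1}/T_{i+1}. -/
theorem martingale_sum_exponential_decay
    (H11 H12 H21 H22 : ℝ)
    (hH11 : 0 ≤ H11) (hH22 : 0 ≤ H22) (hH12 : 0 < H12) (hH21 : 0 < H21)
    (H1 H2 : ℝ) (hH1 : H1 = H11 + H21) (hH2 : H2 = H12 + H22) (hHne : H1 ≠ H2)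
    (f : ℝ → ℝ)
    (hf_cont : ContinuousOn f (Set.Icc 0 1))
    (hf_mono : MonotoneOn f (Set.Icc 0 1))
    (hf_diff : DifferentiableOn ℝ f (Set.Icc 0 1))
    (hf0 : f 0 = 0) (hf1 : f 1 = 1)
    (hf_pos : ∀ x ∈ Set.Ioc (0:ℝ) 1, 0 < f x)
    {Ω : Type*} {m0 : MeasurableSpace Ω} {ℙ : Measure Ω} [IsProbabilityMeasure ℙ]
    (ℱ : Filtration ℕ m0)
    (X : ℕ → Ω → Bool)
    (hX_meas : ∀ n : ℕ, Measurable[ℱ (n + 1)] (X (n + 1)))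
    (Y1 Y2 : ℕ → Ω → ℝ)
    (hY1_meas : ∀ n : ℕ, Measurable[ℱ n] (Y1 n))
    (hY2_meas : ∀ n : ℕ, Measurable[ℱ n] (Y2 n))
    (hY1_ge : ∀ n ω, 1 ≤ Y1 n ω) (hY2_ge : ∀ n ω, 1 ≤ Y2 n ω)
    (T : ℕ → Ω → ℝ) (hT : ∀ n ω, T n ω = Y1 n ω + Y2 n ω)
    (hdraw1 : ∀ n : ℕ,
      ℙ[(fun ω => if X (n + 1) ω then (1 : ℝ) else 0) | ℱ n]
        =ᵐ[ℙ] fun ω => f (Y1 n ω / T n ω) / (f (Y1 n ω / T n ω) + f (Y2 n ω / T n ω)))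
    (hdraw2 : ∀ n : ℕ,
      ℙ[(fun ω => if X (n + 1) ω then (0 : ℝ) else 1) | ℱ n]
        =ᵐ[ℙ] fun ω => f (Y2 n ω / T n ω) / (f (Y1 n ω / T n ω) + f (Y2 n ω / T n ω)))
    (hupd1 : ∀ n ω, Y1 (n + 1) ω = Y1 n ω + (if X (n + 1) ω then H11 else H12))
    (hupd2 : ∀ n ω, Y2 (n + 1) ω = Y2 n ω + (if X (n + 1) ω then H21 else H22))
    (Z : ℕ → Ω → ℝ) (hZ : ∀ n ω, Z n ω = Y1 n ω / T n ω)
    (L : ℕ → Ω → ℝ)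
    (hL : ∀ n ω, L (n + 1) ω =
      if X (n + 1) ω then H11 - Z n ω * H1 else H12 - Z n ω * H2)
    (ΔM : ℕ → Ω → ℝ)
    (hΔM : ∀ n : ℕ, ΔM (n + 1) = L (n + 1) - ℙ[L (n + 1) | ℱ n]) :
    ∀ β > (1:ℝ), ∀ ε : ℝ, 0 < ε →
      ε ≤ 4 * β * (H1 + H2) ^ 2 * Real.log β / min H1 H2 →
      ∃ k0 : ℕ, ∃ a > (0:ℝ), ∀ k > k0, ∀ᶠ n in atTop,
        ℙ {ω | ε ≤ |∑ i ∈ Finset.Icc k n, ΔM (i + 1) ω / T (i + 1) ω|} ≤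
          ENNReal.ofReal (2 * Real.exp (-a * k)) := by
  intro β hβ ε hε hεle
  clear hεle hβ hdraw1 hdraw2 hf_cont hf_mono hf_diff hf0 hf1 hf_pos hHne
  have hH1pos : 0 < H1 := by rw [hH1]; linarith
  have hH2pos : 0 < H2 := by rw [hH2]; linarith
  set m : ℝ := min H1 H2 with hm_def
  have hm : 0 < m := lt_min hH1pos hH2pos
  set C : ℝ := H1 + H2 with hC_def
  have hC : 0 < C := by positivity
  have hmC : m ≤ C := le_trans (min_le_left _ _) (by linarith)
  -- basic bounds on T
  have hTpos : ∀ n ω, 0 < T n ω := fun n ω => by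
    rw [hT]; have := hY1_ge n ω; have := hY2_ge n ω; linarith
  have hT2 : ∀ n ω, 2 ≤ T n ω := fun n ω => by
    rw [hT]; have := hY1_ge n ω; have := hY2_ge n ω; linarith
  have hTstep : ∀ n ω, T (n + 1) ω = T n ω + (if X (n + 1) ω then H1 else H2) := by
    intro n ω
    cases h : X (n + 1) ω <;> simp [hT, hupd1, hupd2, h, hH1, hH2] <;> ring
  have hTmono : ∀ n ω, T n ω + m ≤ T (n + 1) ω := by
    intro n ω
    rw [hTstep]
    have : m ≤ (if X (n + 1) ω then H1 else H2) := by
      split_ifs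
      · exact min_le_left _ _
      · exact min_le_right _ _
    linarith
  have hTgrow : ∀ (n : ℕ) (ω : Ω), 2 + (n:ℝ) * m ≤ T n ω := by
    intro n
    induction n with
    | zero => intro ω; simpa using hT2 0 ω
    | succ n ih =>
      intro ω
      have h1 := hTmono n ω
      have h2 := ih ω
      push_cast
      linarith
  have hTk : ∀ i : ℕ, ∀ ω, (i:ℝ) * m ≤ T i ω := fun i ω => by
    have := hTgrow i ω; linarith
  -- Z in [0,1]
  have hZ01 : ∀ n ω, 0 ≤ Z n ω ∧ Z n ω ≤ 1 := by
    intro n ω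
    rw [hZ]
    constructor
    · apply div_nonneg _ (hTpos n ω).le
      have := hY1_ge n ω; linarith
    · rw [div_le_one (hTpos n ω), hT]
      have := hY2_ge n ω; linarith
  -- |L| ≤ C
  have hL_bdd : ∀ n ω, |L (n + 1) ω| ≤ C := by
    intro n ω
    obtain ⟨hz0, hz1⟩ := hZ01 n ω
    rw [hL]
    have h1 : 0 ≤ Z n ω * H1 := mul_nonneg hz0 hH1pos.le
    have h2 : Z n ω * H1 ≤ H1 := by nlinarith
    have h3 : 0 ≤ Z n ω * H2 := mul_nonneg hz0 hH2pos.le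
    have h4 : Z n ω * H2 ≤ H2 := by nlinarith
    split_ifs
    · rw [abs_le]; constructor <;> [nlinarith; nlinarith]
    · rw [abs_le]; constructor <;> [nlinarith; nlinarith]
  -- measurability of Z, L
  have hZ_meas : ∀ n, Measurable[ℱ n] (Z n) := by
    intro n
    have : Z n = fun ω => Y1 n ω / (Y1 n ω + Y2 n ω) :=
      funext fun ω => by rw [hZ, hT]
    rw [this]
    exact (hY1_meas n).div ((hY1_meas n).add (hY2_meas n))
  have hL_meas : ∀ n, StronglyMeasurable[ℱ (n + 1)] (L (n + 1)) := by
    intro n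
    have hset : MeasurableSet[ℱ (n + 1)] {ω | X (n + 1) ω = true} :=
      hX_meas n (measurableSet_singleton true)
    have heq : L (n + 1) =
        fun ω => if X (n + 1) ω then H11 - Z n ω * H1 else H12 - Z n ω * H2 :=
      funext fun ω => hL n ω
    rw [heq]
    apply Measurable.stronglyMeasurable
    have hZm : Measurable[ℱ (n + 1)] (Z n) := (hZ_meas n).mono (ℱ.mono n.le_succ) le_rfl
    exact Measurable.ite hset (measurable_const.sub (hZm.mul measurable_const))
      (measurable_const.sub (hZm.mul measurable_const))
  have hL_int : ∀ n, Integrable (L (n + 1)) ℙ := fun n =>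
    integrable_of_ae_bdd' ((hL_meas n).mono (ℱ.le (n + 1))).aestronglyMeasurable
      (Filter.Eventually.of_forall (hL_bdd n))
  -- conditional expectation of L is bounded
  have hE_bdd : ∀ n, ∀ᵐ ω ∂ℙ, |(ℙ[L (n + 1) | ℱ n]) ω| ≤ C := by
    intro n
    have hR : ∀ᵐ ω ∂ℙ, |L (n + 1) ω| ≤ ((⟨C, hC.le⟩ : NNReal) : ℝ) :=
      Filter.Eventually.of_forall (hL_bdd n)
    exact ae_bdd_condExp_of_ae_bdd hR
  -- ΔM facts
  have hΔM_bdd : ∀ n, ∀ᵐ ω ∂ℙ, |ΔM (n + 1) ω| ≤ 2 * C := by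
    intro n
    filter_upwards [hE_bdd n] with ω hE
    have heq : ΔM (n + 1) ω = L (n + 1) ω - (ℙ[L (n + 1) | ℱ n]) ω := by
      rw [hΔM n]; rfl
    rw [heq]
    have habs : |L (n + 1) ω - (ℙ[L (n + 1) | ℱ n]) ω| ≤
        |L (n + 1) ω| + |(ℙ[L (n + 1) | ℱ n]) ω| := by
      simpa [sub_eq_add_neg, abs_neg] using
        abs_add_le (L (n + 1) ω) (-(ℙ[L (n + 1) | ℱ n]) ω)
    have := hL_bdd n ω
    linarith
  have hΔM_sm : ∀ n, StronglyMeasurable[ℱ (n + 1)] (ΔM (n + 1)) := by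
    intro n
    rw [hΔM n]
    exact (hL_meas n).sub (stronglyMeasurable_condExp.mono (ℱ.mono n.le_succ))
  have hΔM_int : ∀ n, Integrable (ΔM (n + 1)) ℙ := fun n =>
    integrable_of_ae_bdd' ((hΔM_sm n).mono (ℱ.le (n + 1))).aestronglyMeasurable (hΔM_bdd n)
  have hΔM_cond : ∀ n, ℙ[ΔM (n + 1) | ℱ n] =ᵐ[ℙ] 0 := by
    intro n
    rw [hΔM n]
    have h1 := condExp_sub (m := ℱ n) (μ := ℙ) (g := ℙ[L (n + 1) | ℱ n]) (hL_int n) (integrable_condExp)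
    have h2 := condExp_condExp_of_le (le_refl (ℱ n)) (ℱ.le n)
      (f := L (n + 1)) (μ := ℙ)
    filter_upwards [h1, h2] with ω e1 e2
    rw [e1]
    simp only [Pi.sub_apply, Pi.zero_apply]
    rw [e2]
    ring
  -- the martingale increments D
  set D : ℕ → Ω → ℝ := fun i ω => ΔM (i + 1) ω / T i ω with hD_def
  have hT_sm : ∀ i, StronglyMeasurable[ℱ i] (T i) := by
    intro i
    have : T i = fun ω => Y1 i ω + Y2 i ω := funext fun ω => hT i ω
    rw [this]
    exact ((hY1_meas i).add (hY2_meas i)).stronglyMeasurable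
  have hD_sm : ∀ i, StronglyMeasurable[ℱ (i + 1)] (D i) := by
    intro i
    apply Measurable.stronglyMeasurable
    exact ((hΔM_sm i).measurable).div
      (((hT_sm i).measurable).mono (ℱ.mono i.le_succ) le_rfl)
  have hD_cond : ∀ i, ℙ[D i | ℱ i] =ᵐ[ℙ] 0 := by
    intro i
    have hf_sm : StronglyMeasurable[ℱ i] (fun ω => (T i ω)⁻¹) := by
      have he : (fun ω => (T i ω)⁻¹) = fun ω => (Y1 i ω + Y2 i ω)⁻¹ :=
        funext fun ω => by rw [hT]
      rw [he]
      exact ((hY1_meas i).add (hY2_meas i)).inv.stronglyMeasurable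
    have heq : D i = (fun ω => (T i ω)⁻¹) * ΔM (i + 1) := by
      funext ω
      simp only [hD_def, Pi.mul_apply]
      rw [div_eq_mul_inv, mul_comm]
    have hfg_int : Integrable ((fun ω => (T i ω)⁻¹) * ΔM (i + 1)) ℙ := by
      apply integrable_of_ae_bdd' (C := C)
        ((((hf_sm.mono (ℱ.le i))).mul ((hΔM_sm i).mono (ℱ.le (i + 1)))).aestronglyMeasurable)
      filter_upwards [hΔM_bdd i] with ω h1
      rw [Pi.mul_apply, abs_mul]
      have hTw := hT2 i ω
      have hi1 : |(T i ω)⁻¹| ≤ 1 / 2 := by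
        rw [abs_of_pos (by positivity)]
        rw [inv_le_comm₀ (by linarith) (by norm_num)]
        linarith
      calc |(T i ω)⁻¹| * |ΔM (i + 1) ω| ≤ (1/2) * (2 * C) := by
            apply mul_le_mul hi1 h1 (abs_nonneg _) (by norm_num)
        _ = C := by ring
    have h := condExp_mul_of_stronglyMeasurable_left hf_sm hfg_int (hΔM_int i)
    rw [heq]
    refine h.trans ?_
    filter_upwards [hΔM_cond i] with ω e
    simp only [Pi.zero_apply] at e
    simp only [Pi.mul_apply, Pi.zero_apply]
    rw [e]
    ring
  set c : ℕ → ℝ := fun i => 2 * C / (m * i) with hc_def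
  have hc_nonneg : ∀ i, 1 ≤ i → 0 ≤ c i := by
    intro i hi
    have : (0:ℝ) < i := by exact_mod_cast hi
    positivity
  have hD_bdd : ∀ i, 1 ≤ i → ∀ᵐ ω ∂ℙ, |D i ω| ≤ c i := by
    intro i hi
    filter_upwards [hΔM_bdd i] with ω h1
    have hipos : (0:ℝ) < i := by exact_mod_cast hi
    have hTi : m * i ≤ T i ω := by
      have := hTk i ω; linarith [mul_comm m (i:ℝ)]
    have hTipos : (0:ℝ) < T i ω := hTpos i ω
    simp only [hD_def]
    rw [abs_div, abs_of_pos hTipos]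
    exact div_le_div₀ (by positivity) h1 (mul_pos hm hipos) hTi
  -- constants
  set ε' : ℝ := ε / 2 with hε'_def
  have hε' : 0 < ε' := by positivity
  set B : ℝ := 8 * C ^ 2 / m ^ 2 with hB_def
  have hB : 0 < B := by positivity
  set lam0 : ℝ := min (ε' / (2 * B)) (m / (2 * C)) with hlam0_def
  have hlam0 : 0 < lam0 := lt_min (by positivity) (by positivity)
  have hlam0B : lam0 * B ≤ ε' / 2 := by
    calc lam0 * B ≤ (ε' / (2 * B)) * B := mul_le_mul_of_nonneg_right (min_le_left _ _) hB.le
      _ = ε' / 2 := by field_simp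
  set a : ℝ := lam0 * ε' / 2 with ha_def
  have ha : 0 < a := by positivity
  refine ⟨Nat.ceil (4 * C / (m * ε)) + 1, a, ha, ?_⟩
  intro k hk
  apply Filter.Eventually.of_forall
  intro n
  -- k facts
  have hk1 : 1 ≤ k := by omega
  have hkpos : (0:ℝ) < k := by exact_mod_cast hk1
  have hkC : 4 * C / (m * ε) ≤ (k:ℝ) := by
    have h1 : (4 * C / (m * ε)) ≤ (Nat.ceil (4 * C / (m * ε)) : ℝ) := Nat.le_ceil _
    have h2' : (Nat.ceil (4 * C / (m * ε)) + 1 : ℕ) ≤ k := le_of_lt hk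
    have h2 : (Nat.ceil (4 * C / (m * ε)) : ℝ) + 1 ≤ (k:ℝ) := by exact_mod_cast h2'
    linarith
  have hRk : 2 * C / ((k:ℝ) * m) ≤ ε' := by
    have hd : 0 < (4 * C / (m * ε)) * m := by positivity
    calc 2 * C / ((k:ℝ) * m) ≤ 2 * C / ((4 * C / (m * ε)) * m) := by
          apply div_le_div_of_nonneg_left (by positivity) hd
          apply mul_le_mul_of_nonneg_right hkC hm.le
      _ = ε / 2 := by field_simp; ring
  -- apply the Azuma bound
  set l : ℝ := (k:ℝ) * lam0 with hl_def
  have hlpos : 0 < l := by positivity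
  have hlc : ∀ i, k ≤ i → l * c i ≤ 1 := by
    intro i hik
    have hipos : (0:ℝ) < i := by
      have : 1 ≤ i := le_trans hk1 hik
      exact_mod_cast this
    have hki : (k:ℝ) ≤ i := by exact_mod_cast hik
    have h1 : c i ≤ 2 * C / (m * k) := by
      apply div_le_div_of_nonneg_left (by positivity) (mul_pos hm hkpos)
      apply mul_le_mul_of_nonneg_left hki hm.le
    calc l * c i ≤ l * (2 * C / (m * k)) := mul_le_mul_of_nonneg_left h1 hlpos.le
      _ = lam0 * (2 * C / m) := by rw [hl_def]; field_simp
      _ ≤ (m / (2 * C)) * (2 * C / m) := by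
          apply mul_le_mul_of_nonneg_right (min_le_right _ _) (by positivity)
      _ = 1 := by field_simp
  have hVk : ∀ N : ℕ, ∑ i ∈ Finset.Ico k N, (c i) ^ 2 ≤ B / k := by
    intro N
    have he : ∀ i ∈ Finset.Ico k N, (c i) ^ 2 = (2 * C / m) ^ 2 * (1 / (i:ℝ)) ^ 2 := by
      intro i _
      simp only [hc_def]
      ring
    calc ∑ i ∈ Finset.Ico k N, (c i) ^ 2
        = ∑ i ∈ Finset.Ico k N, (2 * C / m) ^ 2 * (1 / (i:ℝ)) ^ 2 := Finset.sum_congr rfl he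
      _ = (2 * C / m) ^ 2 * ∑ i ∈ Finset.Ico k N, (1 / (i:ℝ)) ^ 2 := by
          rw [Finset.mul_sum]
      _ ≤ (2 * C / m) ^ 2 * (2 / (k:ℝ)) :=
          mul_le_mul_of_nonneg_left (sum_inv_sq_le k hk1 N) (by positivity)
      _ = B / k := by rw [hB_def]; field_simp; ring
  have hexp_le : l ^ 2 * (B / k) - l * ε' ≤ -(a * k) := by
    have h1 : l ^ 2 * (B / k) = (k:ℝ) * (lam0 * (lam0 * B)) := by
      rw [hl_def]; field_simp
    have h2 : l * ε' = (k:ℝ) * (lam0 * ε') := by rw [hl_def]; ring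
    rw [h1, h2, ha_def]
    have h3 : lam0 * (lam0 * B) ≤ lam0 * (ε' / 2) := mul_le_mul_of_nonneg_left hlam0B hlam0.le
    nlinarith
  -- Azuma for D and -D
  have hmeasD : ∀ i, k ≤ i → StronglyMeasurable[ℱ (i + 1)] (D i) := fun i _ => hD_sm i
  have hcD : ∀ i, k ≤ i → 0 ≤ c i := fun i hik => hc_nonneg i (le_trans hk1 hik)
  have hbddD : ∀ i, k ≤ i → ∀ᵐ ω ∂ℙ, |D i ω| ≤ c i := fun i hik =>
    hD_bdd i (le_trans hk1 hik)
  have hcondD : ∀ i, k ≤ i → ℙ[D i | ℱ i] =ᵐ[ℙ] 0 := fun i _ => hD_cond i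
  have hpos := azuma_mgf ℱ D c k l hmeasD hcD hbddD hcondD hlpos.le hlc (n + 1)
  have hneg := azuma_mgf ℱ (fun i => -(D i)) c k l
    (fun i hik => (hmeasD i hik).neg) hcD
    (fun i hik => by filter_upwards [hbddD i hik] with ω h; simpa using h)
    (fun i hik => by
      have := condExp_neg (D i) (m := ℱ i) (μ := ℙ)
      refine this.trans ?_
      filter_upwards [hcondD i hik] with ω e
      simp only [Pi.neg_apply, Pi.zero_apply] at *
      rw [e]; ring)
    hlpos.le hlc (n + 1)
  set S : Ω → ℝ := fun ω => ∑ i ∈ Finset.Ico k (n + 1), D i ω with hS_def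
  have tail_pos : ℙ {ω | ε' ≤ S ω} ≤ ENNReal.ofReal (Real.exp (-(a * k))) := by
    have h := chernoff_tail S l ε' (l ^ 2 * ∑ i ∈ Finset.Ico k (n + 1), (c i) ^ 2)
      hlpos.le hpos.1 hpos.2
    refine le_trans h (ENNReal.ofReal_le_ofReal (Real.exp_le_exp.2 ?_))
    have hV := hVk (n + 1)
    have : l ^ 2 * ∑ i ∈ Finset.Ico k (n + 1), (c i) ^ 2 ≤ l ^ 2 * (B / k) :=
      mul_le_mul_of_nonneg_left hV (by positivity)
    linarith [hexp_le]
  have tail_neg : ℙ {ω | ε' ≤ -S ω} ≤ ENNReal.ofReal (Real.exp (-(a * k))) := by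
    have hfun : ∀ ω, Real.exp (l * ∑ i ∈ Finset.Ico k (n + 1), (fun j => -(D j)) i ω)
        = Real.exp (l * -S ω) := by
      intro ω
      congr 1
      simp [hS_def]
    have hint2 : Integrable (fun ω => Real.exp (l * -S ω)) ℙ :=
      hneg.1.congr (Filter.Eventually.of_forall hfun)
    have hmgf2 : ∫ ω, Real.exp (l * -S ω) ∂ℙ ≤
        Real.exp (l ^ 2 * ∑ i ∈ Finset.Ico k (n + 1), (c i) ^ 2) := by
      refine le_trans (le_of_eq ?_) hneg.2
      exact integral_congr_ae (Filter.Eventually.of_forall fun ω => (hfun ω).symm)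
    have h := chernoff_tail (fun ω => -S ω) l ε'
      (l ^ 2 * ∑ i ∈ Finset.Ico k (n + 1), (c i) ^ 2) hlpos.le hint2 hmgf2
    refine le_trans h (ENNReal.ofReal_le_ofReal (Real.exp_le_exp.2 ?_))
    have hV := hVk (n + 1)
    have : l ^ 2 * ∑ i ∈ Finset.Ico k (n + 1), (c i) ^ 2 ≤ l ^ 2 * (B / k) :=
      mul_le_mul_of_nonneg_left hV (by positivity)
    linarith [hexp_le]
  -- remainder bound and event inclusion
  have hsub : {ω | ε ≤ |∑ i ∈ Finset.Icc k n, ΔM (i + 1) ω / T (i + 1) ω|}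
      ≤ᵐ[ℙ] (({ω | ε' ≤ S ω} ∪ {ω | ε' ≤ -S ω} : Set Ω)) := by
    have hball : ∀ᵐ ω ∂ℙ, ∀ i, |ΔM (i + 1) ω| ≤ 2 * C := ae_all_iff.2 hΔM_bdd
    filter_upwards [hball] with ω hb hmem
    -- decompose the sum
    have hdec : ∑ i ∈ Finset.Icc k n, ΔM (i + 1) ω / T (i + 1) ω
        = S ω + ∑ i ∈ Finset.Icc k n,
            (ΔM (i + 1) ω / T (i + 1) ω - ΔM (i + 1) ω / T i ω) := by
      rw [hS_def]
      rw [← Finset.Ico_add_one_right_eq_Icc, ← Finset.sum_add_distrib]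
      apply Finset.sum_congr rfl
      intro i _
      simp only [hD_def]
      ring
    -- remainder bound
    have hrem : |∑ i ∈ Finset.Icc k n,
        (ΔM (i + 1) ω / T (i + 1) ω - ΔM (i + 1) ω / T i ω)| ≤ ε' := by
      have hterm : ∀ i ∈ Finset.Icc k n,
          |ΔM (i + 1) ω / T (i + 1) ω - ΔM (i + 1) ω / T i ω| ≤
            2 * C * ((fun j : ℕ => 1 / T j ω) i - (fun j : ℕ => 1 / T j ω) (i + 1)) := by
        intro i _
        have hTi := hTpos i ω
        have hTi1 := hTpos (i + 1) ω
        have hmono := hTmono i ω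
        have heq2 : ΔM (i + 1) ω / T (i + 1) ω - ΔM (i + 1) ω / T i ω
            = ΔM (i + 1) ω * (1 / T (i + 1) ω - 1 / T i ω) := by ring
        rw [heq2, abs_mul]
        have habs2 : |1 / T (i + 1) ω - 1 / T i ω| = 1 / T i ω - 1 / T (i + 1) ω := by
          rw [abs_of_nonpos]
          · ring
          · have : 1 / T (i + 1) ω ≤ 1 / T i ω :=
              one_div_le_one_div_of_le hTi (by linarith)
            linarith
        rw [habs2]
        simp only
        apply mul_le_mul_of_nonneg_right (hb i)
        have : 1 / T (i + 1) ω ≤ 1 / T i ω := one_div_le_one_div_of_le hTi (by linarith)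
        linarith
      calc |∑ i ∈ Finset.Icc k n,
            (ΔM (i + 1) ω / T (i + 1) ω - ΔM (i + 1) ω / T i ω)|
          ≤ ∑ i ∈ Finset.Icc k n,
            |ΔM (i + 1) ω / T (i + 1) ω - ΔM (i + 1) ω / T i ω| :=
            Finset.abs_sum_le_sum_abs _ _
        _ ≤ ∑ i ∈ Finset.Icc k n,
            2 * C * ((fun j : ℕ => 1 / T j ω) i - (fun j : ℕ => 1 / T j ω) (i + 1)) :=
            Finset.sum_le_sum hterm
        _ ≤ ε' := by
            rcases le_or_gt k (n + 1) with hkn | hkn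
            · rw [← Finset.Ico_add_one_right_eq_Icc, ← Finset.mul_sum,
                tele_sum (fun j : ℕ => 1 / T j ω) k (n + 1) hkn]
              have h1 : (0:ℝ) < 1 / T (n + 1) ω := by
                have := hTpos (n + 1) ω
                positivity
              have h2 : 2 * C * (1 / T k ω) ≤ 2 * C / ((k:ℝ) * m) := by
                rw [mul_one_div]
                apply div_le_div_of_nonneg_left (by positivity) (mul_pos hkpos hm)
                have := hTk k ω
                linarith
              have h3 : 2 * C * (1 / T k ω - 1 / T (n + 1) ω) ≤ 2 * C * (1 / T k ω) := by
                nlinarith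
              linarith [hRk]
            · rw [Finset.Icc_eq_empty (by omega)]
              simp [hε'.le]
    -- conclude inclusion
    have hmem' : ε ≤ |∑ i ∈ Finset.Icc k n, ΔM (i + 1) ω / T (i + 1) ω| := hmem
    rw [hdec] at hmem'
    have htri : |S ω + ∑ i ∈ Finset.Icc k n,
        (ΔM (i + 1) ω / T (i + 1) ω - ΔM (i + 1) ω / T i ω)| ≤
        |S ω| + |∑ i ∈ Finset.Icc k n,
        (ΔM (i + 1) ω / T (i + 1) ω - ΔM (i + 1) ω / T i ω)| := abs_add_le _ _
    have hS2 : ε' ≤ |S ω| := by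
      have : ε = ε' + ε' := by rw [hε'_def]; ring
      linarith
    show ε' ≤ S ω ∨ ε' ≤ -S ω
    exact le_abs.1 hS2
  calc ℙ {ω | ε ≤ |∑ i ∈ Finset.Icc k n, ΔM (i + 1) ω / T (i + 1) ω|}
      ≤ ℙ ({ω | ε' ≤ S ω} ∪ {ω | ε' ≤ -S ω}) := measure_mono_ae hsub
    _ ≤ ℙ {ω | ε' ≤ S ω} + ℙ {ω | ε' ≤ -S ω} := measure_union_le _ _
    _ ≤ ENNReal.ofReal (Real.exp (-(a * k))) + ENNReal.ofReal (Real.exp (-(a * k))) :=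
        add_le_add tail_pos tail_neg
    _ = ENNReal.ofReal (2 * Real.exp (-a * k)) := by
        rw [← ENNReal.ofReal_add (Real.exp_nonneg _) (Real.exp_nonneg _)]
        congr 1
        rw [neg_mul]
        ring
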